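/- (Proposition 3.1) Let x_1, …, x_n ∈ ℝ^d, let f ∈ ℝ^n be a fault vector whose support has cardinality m, and let D ∈ ℝ^{n×n} be the faulty Euclidean distance matrix with entries D_{ij} = (‖x_i − x_j‖ + f_i + f_j)² for i ≠ j and D_{ii} = 0. Then rank(D) ≤ min(d + 2 + 2m, n). -/

import Mathlib

open Matrix

lemma my_rank_add_le {n m : ℕ} (A B : Matrix (Fin n) (Fin m) ℝ) :
    (A + B).rank ≤ A.rank + B.rank := by
  classical
  rw [Matrix.rank, Matrix.rank, Matrix.rank, Matrix.mulVecLin_add]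
  refine le_trans (Submodule.finrank_mono ?_) (Submodule.finrank_add_le_finrank_add_finrank _ _)
  rintro y ⟨v, rfl⟩
  exact Submodule.add_mem_sup ⟨v, rfl⟩ ⟨v, rfl⟩

theorem faulty_edm_rank_le
    {n d : ℕ} (x : Fin n → EuclideanSpace ℝ (Fin d))
    (f : Fin n → ℝ) (m : ℕ)
    (hm : (Function.support f).ncard = m)
    (D : Matrix (Fin n) (Fin n) ℝ)
    (hD : ∀ i j, D i j = if i = j then 0 else (‖x i - x j‖ + f i + f j) ^ 2) :
    D.rank ≤ min (d + 2 + 2 * m) n := by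
  classical
  -- the Gram-type part
  set U : Matrix (Fin n) (Fin d ⊕ Fin 2) ℝ :=
    fun i => Sum.elim (fun k => -2 * x i k) (fun t => if t = 0 then ‖x i‖ ^ 2 else 1) with hU
  set V : Matrix (Fin d ⊕ Fin 2) (Fin n) ℝ :=
    fun k j => Sum.elim (fun k => x j k) (fun t => if t = 0 then 1 else ‖x j‖ ^ 2) k with hV
  set G : Matrix (Fin n) (Fin n) ℝ := U * V with hG
  have hGapply : ∀ i j, G i j = ‖x i - x j‖ ^ 2 := by
    intro i j
    have hinner : (inner ℝ (x i) (x j) : ℝ) = ∑ k, x i k * x j k := by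
      simp [PiLp.inner_apply, RCLike.inner_apply, mul_comm]
    rw [hG, Matrix.mul_apply, Fintype.sum_sum_type, Fin.sum_univ_two,
      norm_sub_sq_real, hinner, Finset.mul_sum]
    simp [hU, hV, mul_comm]
    ring_nf
  -- the row part
  set Q1 : Matrix (Fin n) (Fin n) ℝ :=
    fun i j => if i = j then 0 else 2 * ‖x i - x j‖ + f i + 2 * f j with hQ1
  set Q2 : Matrix (Fin n) (Fin n) ℝ :=
    fun i j => if i = j then 0 else 2 * ‖x i - x j‖ + f j with hQ2
  set R : Matrix (Fin n) (Fin n) ℝ := Matrix.diagonal f * Q1 with hR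
  set C : Matrix (Fin n) (Fin n) ℝ := Q2 * Matrix.diagonal f with hC
  have hdecomp : D = G + R + C := by
    ext i j
    have hRij : R i j = f i * Q1 i j := by rw [hR, Matrix.diagonal_mul]
    have hCij : C i j = Q2 i j * f j := by rw [hC, Matrix.mul_diagonal]
    rw [Matrix.add_apply, Matrix.add_apply, hRij, hCij, hD, hGapply, hQ1, hQ2]
    by_cases h : i = j
    · simp [h]
    · simp only [h, if_false]
      ring
  have hcard : Fintype.card {i // f i ≠ 0} = m := by
    rw [← hm, ← Nat.card_coe_set_eq, Nat.card_eq_fintype_card]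
    exact Fintype.card_congr (Equiv.subtypeEquivRight fun i => Function.mem_support.symm)
  have hRrank : R.rank ≤ m := by
    calc R.rank ≤ (Matrix.diagonal f).rank := Matrix.rank_mul_le_left _ _
    _ = m := by rw [Matrix.rank_diagonal, hcard]
  have hCrank : C.rank ≤ m := by
    calc C.rank ≤ (Matrix.diagonal f).rank := Matrix.rank_mul_le_right _ _
    _ = m := by rw [Matrix.rank_diagonal, hcard]
  have hGrank : G.rank ≤ d + 2 := by
    calc G.rank ≤ U.rank := Matrix.rank_mul_le_left _ _
    _ ≤ Fintype.card (Fin d ⊕ Fin 2) := Matrix.rank_le_card_width _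
    _ = d + 2 := by simp
  refine le_min ?_ ?_
  · calc D.rank = (G + R + C).rank := by rw [hdecomp]
    _ ≤ (G + R).rank + C.rank := my_rank_add_le _ _
    _ ≤ G.rank + R.rank + C.rank := Nat.add_le_add_right (my_rank_add_le _ _) _
    _ ≤ (d + 2) + m + m := by gcongr
    _ = d + 2 + 2 * m := by ring
  · calc D.rank ≤ Fintype.card (Fin n) := Matrix.rank_le_card_width _
    _ = n := Fintype.card_fin n
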